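/- Let R = (R_1, …, R_n) and T = (T_1, …, T_n) be tuples of bounded operators on complex Hilbert spaces L and M respectively, and let q_{ij} (1 ≤ i < j ≤ n) be complex numbers. Then the maximal q-commuting piece of the direct-sum tuple (R_1 ⊕ T_1, …, R_n ⊕ T_n) acting on the Hilbert space direct sum L ⊕ M equals L^q(R) ⊕ M^q(T), the direct sum of the maximal q-commuting pieces of R and of T. -/

import Mathlib

def qPiece {M : Type*} [NormedAddCommGroup M] [InnerProductSpace ℂ M] [CompleteSpace M]
    {n : ℕ} (R : Fin n → M →L[ℂ] M) (q : Fin n → Fin n → ℂ) : Set M :=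
  {h : M | ∀ i j : Fin n, i < j → ∀ α : List (Fin n),
    (starRingEnd ℂ (q i j)) • ContinuousLinearMap.adjoint (R j)
        (ContinuousLinearMap.adjoint (R i) (ContinuousLinearMap.adjoint ((α.map R).prod) h))
      - ContinuousLinearMap.adjoint (R i)
        (ContinuousLinearMap.adjoint (R j) (ContinuousLinearMap.adjoint ((α.map R).prod) h))
      = 0}

noncomputable def dirSum {L M : Type*}
    [NormedAddCommGroup L] [InnerProductSpace ℂ L] [CompleteSpace L]
    [NormedAddCommGroup M] [InnerProductSpace ℂ M] [CompleteSpace M]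
    (A : L →L[ℂ] L) (B : M →L[ℂ] M) : WithLp 2 (L × M) →L[ℂ] WithLp 2 (L × M) :=
  ((WithLp.prodContinuousLinearEquiv 2 ℂ L M).symm : L × M →L[ℂ] WithLp 2 (L × M)).comp
    ((A.prodMap B).comp
      ((WithLp.prodContinuousLinearEquiv 2 ℂ L M) : WithLp 2 (L × M) →L[ℂ] L × M))

section aux
variable {L M : Type*}
    [NormedAddCommGroup L] [InnerProductSpace ℂ L] [CompleteSpace L]
    [NormedAddCommGroup M] [InnerProductSpace ℂ M] [CompleteSpace M]

lemma dirSum_fst (A : L →L[ℂ] L) (B : M →L[ℂ] M) (x : WithLp 2 (L × M)) :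
    (dirSum A B x).fst = A x.fst := rfl

lemma dirSum_mul (A C : L →L[ℂ] L) (B D : M →L[ℂ] M) :
    dirSum A B * dirSum C D = dirSum (A * C) (B * D) := rfl

lemma dirSum_one : dirSum (1 : L →L[ℂ] L) (1 : M →L[ℂ] M) = 1 := rfl

lemma adjoint_dirSum (A : L →L[ℂ] L) (B : M →L[ℂ] M) :
    ContinuousLinearMap.adjoint (dirSum A B)
      = dirSum (ContinuousLinearMap.adjoint A) (ContinuousLinearMap.adjoint B) := by
  symm
  rw [ContinuousLinearMap.eq_adjoint_iff]
  intro x y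
  show (inner ℂ (ContinuousLinearMap.adjoint A x.fst) y.fst
        + inner ℂ (ContinuousLinearMap.adjoint B x.snd) y.snd : ℂ)
      = inner ℂ x.fst (A y.fst) + inner ℂ x.snd (B y.snd)
  simp [ContinuousLinearMap.adjoint_inner_left]

lemma prod_map_dirSum {n : ℕ} (R : Fin n → L →L[ℂ] L) (T : Fin n → M →L[ℂ] M)
    (α : List (Fin n)) :
    ((α.map fun i => dirSum (R i) (T i))).prod = dirSum (α.map R).prod (α.map T).prod := by
  induction α with
  | nil => simp [dirSum_one]
  | cons a l ih => simp [ih, dirSum_mul]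

end aux

theorem stmt2 {L M : Type*}
    [NormedAddCommGroup L] [InnerProductSpace ℂ L] [CompleteSpace L]
    [NormedAddCommGroup M] [InnerProductSpace ℂ M] [CompleteSpace M]
    {n : ℕ} (R : Fin n → L →L[ℂ] L) (T : Fin n → M →L[ℂ] M) (q : Fin n → Fin n → ℂ) :
    qPiece (fun i => dirSum (R i) (T i)) q
      = {x : WithLp 2 (L × M) |
          ((WithLp.prodContinuousLinearEquiv 2 ℂ L M) x).1 ∈ qPiece R q ∧
          ((WithLp.prodContinuousLinearEquiv 2 ℂ L M) x).2 ∈ qPiece T q} := by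
  ext x
  have key : ∀ (i j : Fin n) (α : List (Fin n)),
      ((starRingEnd ℂ (q i j)) • ContinuousLinearMap.adjoint (dirSum (R j) (T j))
        (ContinuousLinearMap.adjoint (dirSum (R i) (T i))
          (ContinuousLinearMap.adjoint ((α.map fun i => dirSum (R i) (T i)).prod) x))
      - ContinuousLinearMap.adjoint (dirSum (R i) (T i))
        (ContinuousLinearMap.adjoint (dirSum (R j) (T j))
          (ContinuousLinearMap.adjoint ((α.map fun i => dirSum (R i) (T i)).prod) x)))
      = (WithLp.prodContinuousLinearEquiv 2 ℂ L M).symm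
        ((starRingEnd ℂ (q i j)) • ContinuousLinearMap.adjoint (R j)
            (ContinuousLinearMap.adjoint (R i)
              (ContinuousLinearMap.adjoint ((α.map R).prod) ((WithLp.prodContinuousLinearEquiv 2 ℂ L M) x).1))
          - ContinuousLinearMap.adjoint (R i)
            (ContinuousLinearMap.adjoint (R j)
              (ContinuousLinearMap.adjoint ((α.map R).prod) ((WithLp.prodContinuousLinearEquiv 2 ℂ L M) x).1)),
         (starRingEnd ℂ (q i j)) • ContinuousLinearMap.adjoint (T j)
            (ContinuousLinearMap.adjoint (T i)
              (ContinuousLinearMap.adjoint ((α.map T).prod) ((WithLp.prodContinuousLinearEquiv 2 ℂ L M) x).2))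
          - ContinuousLinearMap.adjoint (T i)
            (ContinuousLinearMap.adjoint (T j)
              (ContinuousLinearMap.adjoint ((α.map T).prod) ((WithLp.prodContinuousLinearEquiv 2 ℂ L M) x).2))) := by
    intro i j α
    rw [prod_map_dirSum, adjoint_dirSum, adjoint_dirSum, adjoint_dirSum]
    rfl
  simp only [qPiece, Set.mem_setOf_eq]
  constructor
  · intro hx
    refine ⟨fun i j hij α => ?_, fun i j hij α => ?_⟩
    · have := hx i j hij α
      rw [key] at this
      exact congrArg Prod.fst (congrArg (WithLp.prodContinuousLinearEquiv 2 ℂ L M) this)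
    · have := hx i j hij α
      rw [key] at this
      exact congrArg Prod.snd (congrArg (WithLp.prodContinuousLinearEquiv 2 ℂ L M) this)
  · intro ⟨h1, h2⟩ i j hij α
    rw [key, h1 i j hij α, h2 i j hij α]
    rfl
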